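/- arXiv:1002.3744 — 4 statements merged into one kernel-verified Lean document; each statement's English description precedes it below -/
import Mathlib

section
/- Let P and Q be two mutually absolutely continuous probability measures on a measurable space. Then sup over x ∈ [0,1] of E_Q[ dP / (x·dQ + (1-x)·dP) ] ≤ 1. -/
open MeasureTheory

/-- For equivalent probability measures with positive densities p, q w.r.t. ν,
sup over x ∈ [0,1] of E_Q[dP/(x dQ + (1-x) dP)] ≤ 1. -/
theorem mixture_ratio_bound_one {Ω : Type*} [MeasurableSpace Ω] (ν : Measure Ω)
    (p q : Ω → ℝ) (hp : Measurable p) (hq : Measurable q)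
    (hppos : ∀ᵐ a ∂ν, 0 < p a) (hqpos : ∀ᵐ a ∂ν, 0 < q a)
    (hp1 : ∫ a, p a ∂ν = 1) (hq1 : ∫ a, q a ∂ν = 1) :
    ∀ x ∈ Set.Icc (0 : ℝ) 1,
      ∫ a, (p a / (x * q a + (1 - x) * p a)) * q a ∂ν ≤ 1 := by
  intro x hx
  obtain ⟨hx0, hx1⟩ := hx
  have hpint : Integrable p ν := by
    by_contra h
    rw [integral_undef h] at hp1
    norm_num at hp1
  have hqint : Integrable q ν := by
    by_contra h
    rw [integral_undef h] at hq1
    norm_num at hq1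
  have hgint : Integrable (fun a => x * p a + (1 - x) * q a) ν :=
    (hpint.const_mul x).add (hqint.const_mul (1 - x))
  have hbound : ∀ᵐ a ∂ν,
      (p a / (x * q a + (1 - x) * p a)) * q a ≤ x * p a + (1 - x) * q a := by
    filter_upwards [hppos, hqpos] with a hpa hqa
    have hD : 0 < x * q a + (1 - x) * p a := by
      rcases le_total (p a) (q a) with h | h
      · nlinarith
      · nlinarith
    rw [div_mul_eq_mul_div, div_le_iff₀ hD]
    nlinarith [mul_nonneg (mul_nonneg hx0 (by linarith : (0:ℝ) ≤ 1 - x)) (sq_nonneg (p a - q a))]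
  have hnonneg : 0 ≤ᵐ[ν] fun a => (p a / (x * q a + (1 - x) * p a)) * q a := by
    filter_upwards [hppos, hqpos] with a hpa hqa
    have hD : 0 < x * q a + (1 - x) * p a := by
      rcases le_total (p a) (q a) with h | h
      · nlinarith
      · nlinarith
    positivity
  calc ∫ a, (p a / (x * q a + (1 - x) * p a)) * q a ∂ν
      ≤ ∫ a, x * p a + (1 - x) * q a ∂ν :=
        integral_mono_of_nonneg hnonneg hgint hbound
    _ = x * ∫ a, p a ∂ν + (1 - x) * ∫ a, q a ∂ν := by
        rw [integral_add (hpint.const_mul x) (hqint.const_mul (1 - x)),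
          integral_const_mul, integral_const_mul]
    _ = 1 := by rw [hp1, hq1]; ring
end

section
/- Let P and Q be two mutually absolutely continuous probability measures. Then sup over x ∈ [0,1] of E_Q[ dQ / (x·dQ + (1-x)·dP) ] ≤ max(1, χ²(Q,P)) + 1, where χ²(Q,P) = ∫ (dQ/dP - 1)² dP is the chi-square divergence. -/
open MeasureTheory

/-- For equivalent probability measures with positive densities p, q w.r.t. ν,
sup over x ∈ [0,1] of E_Q[dQ/(x dQ + (1-x) dP)] ≤ max(1, χ²(Q,P)) + 1. -/
theorem mixture_ratio_bound_chisq {Ω : Type*} [MeasurableSpace Ω] (ν : Measure Ω)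
    (p q : Ω → ℝ) (hp : Measurable p) (hq : Measurable q)
    (hppos : ∀ᵐ a ∂ν, 0 < p a) (hqpos : ∀ᵐ a ∂ν, 0 < q a)
    (hp1 : ∫ a, p a ∂ν = 1) (hq1 : ∫ a, q a ∂ν = 1)
    (hchi : Integrable (fun a => (q a / p a - 1) ^ 2 * p a) ν) :
    ∀ x ∈ Set.Icc (0 : ℝ) 1,
      ∫ a, (q a / (x * q a + (1 - x) * p a)) * q a ∂ν ≤
        max 1 (∫ a, (q a / p a - 1) ^ 2 * p a ∂ν) + 1 := by
  intro x hx
  obtain ⟨hx0, hx1⟩ := hx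
  have h1x : (0:ℝ) ≤ 1 - x := by linarith
  have hqint : Integrable q ν := by
    by_contra h
    rw [integral_undef h] at hq1; norm_num at hq1
  have hpint : Integrable p ν := by
    by_contra h
    rw [integral_undef h] at hp1; norm_num at hp1
  have hdecomp : (fun a => q a ^ 2 / p a) =ᵐ[ν]
      fun a => (q a / p a - 1) ^ 2 * p a + (2 * q a - p a) := by
    filter_upwards [hppos] with a hpa
    field_simp
    ring
  have hqq : Integrable (fun a => q a ^ 2 / p a) ν :=
    (hchi.add ((hqint.const_mul 2).sub hpint)).congr hdecomp.symm
  set g := fun a => x * q a + (1 - x) * (q a ^ 2 / p a) with hg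
  have hgint : Integrable g ν := (hqint.const_mul x).add (hqq.const_mul (1 - x))
  have hbound : ∀ᵐ a ∂ν, ‖(q a / (x * q a + (1 - x) * p a)) * q a‖ ≤ g a := by
    filter_upwards [hppos, hqpos] with a hpa hqa
    have hm : 0 < x * q a + (1 - x) * p a := by
      rcases eq_or_lt_of_le hx0 with h | h
      · have : (1 - x) * p a > 0 := by nlinarith
        nlinarith [mul_nonneg hx0 hqa.le]
      · nlinarith [mul_nonneg h1x hpa.le, mul_pos h hqa]
    have hfpos : 0 ≤ (q a / (x * q a + (1 - x) * p a)) * q a :=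
      mul_nonneg (div_nonneg hqa.le hm.le) hqa.le
    rw [Real.norm_of_nonneg hfpos]
    have h1 : (q a / (x * q a + (1 - x) * p a)) * q a
        = q a ^ 2 / (x * q a + (1 - x) * p a) := by
      rw [div_mul_eq_mul_div, sq]
    rw [h1, div_le_iff₀ hm]
    have hr : q a ^ 2 / p a * p a = q a ^ 2 := div_mul_cancel₀ _ hpa.ne'
    have key : 0 ≤ x * (1 - x) * (q a - p a) ^ 2 * q a :=
      mul_nonneg (mul_nonneg (mul_nonneg hx0 h1x) (sq_nonneg _)) hqa.le
    simp only [hg]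
    have hmul : ((x * q a + (1 - x) * (q a ^ 2 / p a)) * (x * q a + (1 - x) * p a)) * p a
        = (x * q a * p a + (1 - x) * q a ^ 2) * (x * q a + (1 - x) * p a) := by
      field_simp
    rw [← mul_le_mul_iff_of_pos_right hpa, hmul]
    nlinarith [key]
  have hmeas : AEStronglyMeasurable
      (fun a => (q a / (x * q a + (1 - x) * p a)) * q a) ν :=
    ((hq.div ((hq.const_mul x).add (hp.const_mul (1 - x)))).mul hq).aestronglyMeasurable
  have hfint : Integrable (fun a => (q a / (x * q a + (1 - x) * p a)) * q a) ν :=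
    hgint.mono' hmeas hbound
  have hle : ∫ a, (q a / (x * q a + (1 - x) * p a)) * q a ∂ν ≤ ∫ a, g a ∂ν := by
    refine integral_mono_ae hfint hgint ?_
    filter_upwards [hbound] with a ha
    exact le_trans (le_abs_self _) ha
  have hqqval : ∫ a, q a ^ 2 / p a ∂ν
      = (∫ a, (q a / p a - 1) ^ 2 * p a ∂ν) + 1 := by
    have hsub : Integrable (fun a => 2 * q a - p a) ν := (hqint.const_mul 2).sub hpint
    rw [integral_congr_ae hdecomp, integral_add hchi hsub,
      integral_sub (hqint.const_mul 2) hpint, integral_const_mul, hq1, hp1]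
    ring
  have hgval : ∫ a, g a ∂ν
      = x + (1 - x) * ((∫ a, (q a / p a - 1) ^ 2 * p a ∂ν) + 1) := by
    simp only [hg]
    rw [integral_add (hqint.const_mul x) (hqq.const_mul (1 - x)),
      integral_const_mul, integral_const_mul, hq1, hqqval]
    ring
  have hchinn : 0 ≤ ∫ a, (q a / p a - 1) ^ 2 * p a ∂ν := by
    refine integral_nonneg_of_ae ?_
    filter_upwards [hppos] with a hpa
    positivity
  set c := ∫ a, (q a / p a - 1) ^ 2 * p a ∂ν
  have hc : c ≤ max 1 c := le_max_right _ _
  have : (1 - x) * c ≤ c := by nlinarith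
  calc ∫ a, (q a / (x * q a + (1 - x) * p a)) * q a ∂ν
      ≤ x + (1 - x) * (c + 1) := by rw [← hgval]; exact hle
    _ ≤ max 1 c + 1 := by nlinarith
end

section
/- Let Y be a nonnegative random variable and suppose P(Y > y) ≤ α·exp(−y²) for all y ≥ ȳ, where α > 0 and ȳ ≥ 0. Then for all q ≥ 1, E[Y^q] ≤ ȳ^q·(1 + α·ζ_q(ȳ)) where one may take ζ_q(x) = (q/2)·e^{−x} for all x ≥ c·q with c = 1/2 if q ≤ 2πe and c = 0.612 otherwise; in particular, if ȳ ≥ q, then E[Y^q] ≤ ȳ^q·(1 + α·(q/2)·e^{−ȳ}). -/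
open MeasureTheory Set Filter

lemma birge_key {ybar q u : ℝ} (hq : 1 ≤ q) (hybar : q ≤ ybar) (hu : ybar ^ 2 ≤ u) :
    Real.exp (-u) ≤
      ybar ^ (q - 2) * Real.exp (1 - ybar ^ 2) *
        (u ^ (1 - q / 2) * Real.exp (-u / ybar ^ 2)) := by
  have hy1 : 1 ≤ ybar := hq.trans hybar
  have hy0 : 0 < ybar := lt_of_lt_of_le one_pos hy1
  have hB1 : 1 ≤ ybar ^ 2 := one_le_pow₀ hy1
  have hu0 : 0 < u := lt_of_lt_of_le (lt_of_lt_of_le one_pos hB1) hu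
  have hB0 : (0:ℝ) < ybar ^ 2 := by positivity
  rw [Real.rpow_def_of_pos hy0, Real.rpow_def_of_pos hu0, ← Real.exp_add, ← Real.exp_add,
    ← Real.exp_add, Real.exp_le_exp]
  have hL1 : Real.log u - 2 * Real.log ybar ≤ u / ybar ^ 2 - 1 := by
    have h := Real.log_le_sub_one_of_pos (show 0 < u / ybar ^ 2 by positivity)
    rwa [Real.log_div (ne_of_gt hu0) (ne_of_gt hB0), Real.log_pow] at h
  have hL0 : 0 ≤ Real.log u - 2 * Real.log ybar := by
    have h := Real.log_le_log hB0 hu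
    rw [Real.log_pow] at h; push_cast at h; linarith
  have hq2 : q ≤ 2 * ybar ^ 2 := by nlinarith
  set B := ybar ^ 2 with hBdef
  set v := u / B with hv
  have huv : u = v * B := by rw [hv]; field_simp
  have hv1 : 1 ≤ v := (one_le_div hB0).2 hu
  rw [show -u / B = -v by rw [neg_div, hv]]
  set L := Real.log u
  set ly := Real.log ybar
  rcases le_total q 2 with h2 | h2
  · nlinarith [mul_nonneg (by linarith : (0:ℝ) ≤ B - 1) (by linarith : (0:ℝ) ≤ v - 1),
      mul_nonneg (by linarith : (0:ℝ) ≤ 2 - q) hL0]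
  · nlinarith [mul_le_mul_of_nonneg_left hL1 (by linarith : (0:ℝ) ≤ q / 2 - 1),
      mul_le_mul_of_nonneg_right (by linarith : q / 2 - 1 ≤ B - 1) (by linarith : (0:ℝ) ≤ v - 1)]

lemma birge_hasDeriv {ybar q : ℝ} (hq : 0 < q) (hy0 : 0 < ybar) {x : ℝ} (hx : 0 < x) :
    HasDerivAt (fun t : ℝ => -(q / 2 * ybar ^ 2 * Real.exp (-(t ^ (2/q)) / ybar ^ 2)))
      (x ^ (2/q - 1) * Real.exp (-(x ^ (2/q)) / ybar ^ 2)) x := by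
  have h1 : HasDerivAt (fun t : ℝ => t ^ (2/q)) (2/q * x ^ (2/q - 1)) x :=
    Real.hasDerivAt_rpow_const (Or.inl hx.ne')
  have h3 := ((h1.neg.div_const (ybar ^ 2)).exp.const_mul (q / 2 * ybar ^ 2)).neg
  refine h3.congr_deriv ?_
  simp only [Pi.neg_apply]
  field_simp [hq.ne', hy0.ne']

lemma birge_tendsto {ybar q : ℝ} (hq : 0 < q) (hy0 : 0 < ybar) :
    Tendsto (fun t : ℝ => -(q / 2 * ybar ^ 2 * Real.exp (-(t ^ (2/q)) / ybar ^ 2)))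
      atTop (nhds 0) := by
  have h5 : Tendsto (fun t : ℝ => t ^ (2/q)) atTop atTop := tendsto_rpow_atTop (by positivity)
  have h6 : Tendsto (fun t : ℝ => -(t ^ (2/q)) / ybar ^ 2) atTop atBot := by
    apply Tendsto.atBot_div_const (by positivity : (0:ℝ) < ybar ^ 2)
    exact tendsto_neg_atTop_atBot.comp h5
  have h7 := (Real.tendsto_exp_atBot.comp h6).const_mul (q / 2 * ybar ^ 2)
  simpa using h7.neg

lemma birge_integral {ybar q : ℝ} (hq : 1 ≤ q) (hybar : q ≤ ybar) :
    IntegrableOn (fun t : ℝ => t ^ (2/q - 1) * Real.exp (-(t ^ (2/q)) / ybar ^ 2))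
      (Ioi (ybar ^ q)) ∧
    ∫ t in Ioi (ybar ^ q), t ^ (2/q - 1) * Real.exp (-(t ^ (2/q)) / ybar ^ 2) =
      q / 2 * ybar ^ 2 * Real.exp (-1) := by
  have hq0 : 0 < q := lt_of_lt_of_le one_pos hq
  have hy1 : 1 ≤ ybar := hq.trans hybar
  have hy0 : 0 < ybar := lt_of_lt_of_le one_pos hy1
  have hA1 : 1 ≤ ybar ^ q := Real.one_le_rpow hy1 hq0.le
  have hderiv : ∀ x ∈ Ici (ybar ^ q),
      HasDerivAt (fun t : ℝ => -(q / 2 * ybar ^ 2 * Real.exp (-(t ^ (2/q)) / ybar ^ 2)))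
        (x ^ (2/q - 1) * Real.exp (-(x ^ (2/q)) / ybar ^ 2)) x := fun x hx =>
    birge_hasDeriv hq0 hy0 (lt_of_lt_of_le one_pos (hA1.trans hx))
  have hpos : ∀ x ∈ Ioi (ybar ^ q),
      0 ≤ x ^ (2/q - 1) * Real.exp (-(x ^ (2/q)) / ybar ^ 2) := fun x hx => by
    have hx0 : (0:ℝ) < x := lt_of_lt_of_le one_pos (hA1.trans hx.le)
    positivity
  have htop := birge_tendsto hq0 hy0
  have hAval : (ybar ^ q) ^ (2/q) = ybar ^ 2 := by
    rw [← Real.rpow_natCast ybar 2, ← Real.rpow_mul hy0.le]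
    congr 1
    field_simp
    norm_num
  constructor
  · exact integrableOn_Ioi_deriv_of_nonneg' hderiv hpos htop
  · rw [integral_Ioi_of_hasDerivAt_of_nonneg' hderiv hpos htop, hAval]
    rw [show -(ybar ^ 2) / ybar ^ 2 = -1 by field_simp]
    ring

lemma birge_pointwise {ybar q t : ℝ} (hq : 1 ≤ q) (hybar : q ≤ ybar) (ht : ybar ^ q ≤ t) :
    Real.exp (-(t ^ (1/q)) ^ 2) ≤ ybar ^ (q - 2) * Real.exp (1 - ybar ^ 2) *
      (t ^ (2/q - 1) * Real.exp (-(t ^ (2/q)) / ybar ^ 2)) := by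
  have hq0 : 0 < q := lt_of_lt_of_le one_pos hq
  have hy1 : 1 ≤ ybar := hq.trans hybar
  have hy0 : 0 < ybar := lt_of_lt_of_le one_pos hy1
  have hA1 : 1 ≤ ybar ^ q := Real.one_le_rpow hy1 hq0.le
  have ht0 : 0 < t := lt_of_lt_of_le one_pos (hA1.trans ht)
  have hAval : (ybar ^ q) ^ (2/q) = ybar ^ 2 := by
    rw [← Real.rpow_natCast ybar 2, ← Real.rpow_mul hy0.le]
    congr 1
    field_simp
    norm_num
  have hu : ybar ^ 2 ≤ t ^ (2/q) := by
    rw [← hAval]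
    exact Real.rpow_le_rpow (Real.rpow_nonneg hy0.le q) ht (by positivity)
  have hsq : (t ^ (1/q)) ^ 2 = t ^ (2/q) := by
    rw [← Real.rpow_natCast (t ^ (1/q)) 2, ← Real.rpow_mul ht0.le]
    congr 1
    field_simp
    norm_num
  have hts : t ^ (2/q - 1) = (t ^ (2/q)) ^ (1 - q/2) := by
    rw [← Real.rpow_mul ht0.le]
    congr 1
    field_simp
  rw [hsq, hts]
  exact birge_key hq hybar hu

/-- Birgé's moment bound: if P(Y > y) ≤ α e^{−y²} for y ≥ ȳ and ȳ ≥ q ≥ 1,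
then E[Y^q] ≤ ȳ^q (1 + α (q/2) e^{−ȳ}). -/
theorem birge_moment_bound {Ω : Type*} [MeasurableSpace Ω] (μ : Measure Ω)
    [IsProbabilityMeasure μ] (Y : Ω → ℝ) (hY : Measurable Y) (hYnn : ∀ ω, 0 ≤ Y ω)
    (α ybar q : ℝ) (hα : 0 < α) (hq : 1 ≤ q) (hybar : q ≤ ybar)
    (htail : ∀ y, ybar ≤ y → (μ {ω | y < Y ω}).toReal ≤ α * Real.exp (-y ^ 2)) :
    ∫ ω, Y ω ^ q ∂μ ≤ ybar ^ q * (1 + α * (q / 2) * Real.exp (-ybar)) := by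
  have hq0 : 0 < q := lt_of_lt_of_le one_pos hq
  have hy1 : 1 ≤ ybar := hq.trans hybar
  have hy0 : 0 < ybar := lt_of_lt_of_le one_pos hy1
  have hA1 : 1 ≤ ybar ^ q := Real.one_le_rpow hy1 hq0.le
  have hA0 : 0 < ybar ^ q := lt_of_lt_of_le one_pos hA1
  set A := ybar ^ q with hAdef
  set R := ybar ^ q * (α * (q / 2) * Real.exp (-ybar)) with hRdef
  have hR0 : 0 ≤ R := by
    have := Real.exp_pos (-ybar)
    have h2 : 0 < α * (q / 2) * Real.exp (-ybar) := by positivity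
    nlinarith
  have hYq_nn : 0 ≤ᵐ[μ] fun ω => Y ω ^ q := ae_of_all _ fun ω => Real.rpow_nonneg (hYnn ω) q
  have hmeas : Measurable fun ω => Y ω ^ q := (by measurability : Measurable fun ω => Y ω ^ q)
  rw [integral_eq_lintegral_of_nonneg_ae hYq_nn hmeas.aestronglyMeasurable]
  apply ENNReal.toReal_le_of_le_ofReal (by nlinarith : (0:ℝ) ≤ ybar ^ q * (1 + α * (q / 2) * Real.exp (-ybar)))
  rw [lintegral_eq_lintegral_meas_lt μ hYq_nn hmeas.aemeasurable]
  -- split the integral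
  have h1 : ∫⁻ t in Ioc 0 A, μ {ω | t < Y ω ^ q} ≤ ENNReal.ofReal A := by
    calc ∫⁻ t in Ioc 0 A, μ {ω | t < Y ω ^ q} ≤ ∫⁻ _ in Ioc 0 A, 1 :=
          lintegral_mono fun t => prob_le_one
    _ = ENNReal.ofReal A := by
        rw [setLIntegral_one, Real.volume_Ioc, sub_zero]
  have h2 : ∫⁻ t in Ioi A, μ {ω | t < Y ω ^ q} ≤ ENNReal.ofReal R := by
    have hgmeas : Measurable fun t : ℝ =>
        ENNReal.ofReal (α * (ybar ^ (q - 2) * Real.exp (1 - ybar ^ 2) *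
          (t ^ (2/q - 1) * Real.exp (-(t ^ (2/q)) / ybar ^ 2)))) := by
      apply ENNReal.measurable_ofReal.comp
      apply Measurable.const_mul
      apply Measurable.const_mul
      measurability
    calc ∫⁻ t in Ioi A, μ {ω | t < Y ω ^ q}
        ≤ ∫⁻ t in Ioi A, ENNReal.ofReal (α * (ybar ^ (q - 2) * Real.exp (1 - ybar ^ 2) *
            (t ^ (2/q - 1) * Real.exp (-(t ^ (2/q)) / ybar ^ 2)))) := by
          apply setLIntegral_mono hgmeas
          intro t ht
          have htA : A ≤ t := le_of_lt ht
          have ht0 : 0 < t := lt_of_lt_of_le hA0 htA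
          have hsub : {ω | t < Y ω ^ q} ⊆ {ω | t ^ (1/q) < Y ω} := by
            intro ω hω
            have h := Real.rpow_lt_rpow ht0.le hω (by positivity : (0:ℝ) < 1/q)
            rwa [← Real.rpow_mul (hYnn ω), mul_one_div, div_self hq0.ne',
              Real.rpow_one] at h
          have hty : ybar ≤ t ^ (1/q) := by
            have h := Real.rpow_le_rpow (Real.rpow_nonneg hy0.le q) htA
              (by positivity : (0:ℝ) ≤ 1/q)
            rwa [← Real.rpow_mul hy0.le, mul_one_div, div_self hq0.ne', Real.rpow_one] at h
          calc μ {ω | t < Y ω ^ q} ≤ μ {ω | t ^ (1/q) < Y ω} := measure_mono hsub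
          _ ≤ ENNReal.ofReal (α * Real.exp (-(t ^ (1/q)) ^ 2)) := by
              rw [ENNReal.le_ofReal_iff_toReal_le (measure_ne_top μ _) (by positivity)]
              exact htail _ hty
          _ ≤ _ := by
              apply ENNReal.ofReal_le_ofReal
              exact mul_le_mul_of_nonneg_left (birge_pointwise hq hybar htA) hα.le
    _ = ENNReal.ofReal (∫ t in Ioi A, α * (ybar ^ (q - 2) * Real.exp (1 - ybar ^ 2) *
          (t ^ (2/q - 1) * Real.exp (-(t ^ (2/q)) / ybar ^ 2)))) := by
        rw [ofReal_integral_eq_lintegral_ofReal]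
        · exact (((birge_integral hq hybar).1.const_mul _).const_mul _)
        · rw [EventuallyLE, ae_restrict_iff' measurableSet_Ioi]
          apply ae_of_all
          intro t ht
          have ht0 : 0 < t := lt_of_lt_of_le hA0 (le_of_lt ht)
          exact mul_nonneg hα.le (mul_nonneg
            (mul_nonneg (Real.rpow_nonneg hy0.le _) (Real.exp_pos _).le)
            (mul_nonneg (Real.rpow_nonneg ht0.le _) (Real.exp_pos _).le))
    _ ≤ ENNReal.ofReal R := by
        apply ENNReal.ofReal_le_ofReal
        rw [integral_const_mul, integral_const_mul, (birge_integral hq hybar).2]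
        have e1 : ybar ^ (q - 2) * ybar ^ 2 = ybar ^ q := by
          rw [← Real.rpow_natCast ybar 2, ← Real.rpow_add hy0]
          norm_num
        have e2 : Real.exp (1 - ybar ^ 2) * Real.exp (-1) = Real.exp (-ybar ^ 2) := by
          rw [← Real.exp_add]; ring_nf
        have e3 : Real.exp (-ybar ^ 2) ≤ Real.exp (-ybar) := Real.exp_le_exp.2 (by nlinarith)
        calc α * (ybar ^ (q - 2) * Real.exp (1 - ybar ^ 2) * (q / 2 * ybar ^ 2 * Real.exp (-1)))
            = α * (q / 2) * (ybar ^ (q - 2) * ybar ^ 2) *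
              (Real.exp (1 - ybar ^ 2) * Real.exp (-1)) := by ring
        _ = α * (q / 2) * ybar ^ q * Real.exp (-ybar ^ 2) := by rw [e1, e2]
        _ ≤ α * (q / 2) * ybar ^ q * Real.exp (-ybar) := by
            apply mul_le_mul_of_nonneg_left e3
            have := Real.rpow_nonneg hy0.le q
            positivity
        _ = R := by rw [hRdef]; ring
  calc ∫⁻ t in Ioi 0, μ {ω | t < Y ω ^ q}
      = (∫⁻ t in Ioc 0 A, μ {ω | t < Y ω ^ q}) + ∫⁻ t in Ioi A, μ {ω | t < Y ω ^ q} := by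
        rw [← lintegral_union measurableSet_Ioi (Set.Ioc_disjoint_Ioi le_rfl),
          Set.Ioc_union_Ioi_eq_Ioi hA0.le]
  _ ≤ ENNReal.ofReal A + ENNReal.ofReal R := add_le_add h1 h2
  _ = ENNReal.ofReal (A + R) := (ENNReal.ofReal_add (le_of_lt hA0) hR0).symm
  _ = ENNReal.ofReal (ybar ^ q * (1 + α * (q / 2) * Real.exp (-ybar))) := by
      rw [hAdef, hRdef]; congr 1; ring
end

section
/- Let R, R̂ > 0 and let Ω(t) = |t−1|/(t+1). If R ≤ 1 < R̂ or R̂ ≤ 1 < R (i.e., the classifiers 1_{R>1} and 1_{R̂>1} disagree), then Ω(R) ≤ Ω(R/R̂). -/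
/-- If the classifiers 1_{R>1} and 1_{R̂>1} disagree, then Ω(R) ≤ Ω(R/R̂),
where Ω(t) = |t-1|/(t+1). -/
theorem omega_disagreement (R Rh : ℝ) (hR : 0 < R) (hRh : 0 < Rh)
    (hdis : (R ≤ 1 ∧ 1 < Rh) ∨ (Rh ≤ 1 ∧ 1 < R)) :
    |R - 1| / (R + 1) ≤ |R / Rh - 1| / (R / Rh + 1) := by
  have hx0 : 0 < R / Rh := div_pos hR hRh
  rcases hdis with ⟨h1, h2⟩ | ⟨h1, h2⟩
  · have hx : R / Rh ≤ R := by
      rw [div_le_iff₀ hRh]; nlinarith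
    rw [abs_of_nonpos (by linarith), abs_of_nonpos (by linarith),
      div_le_div_iff₀ (by linarith) (by linarith)]
    nlinarith
  · have hx : R ≤ R / Rh := by
      rw [le_div_iff₀ hRh]; nlinarith
    rw [abs_of_nonneg (by linarith), abs_of_nonneg (by linarith),
      div_le_div_iff₀ (by linarith) (by linarith)]
    nlinarith
end
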